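/- Let 1 ≤ m ≤ p and let W be an m-dimensional subspace of R^p. Then there exists an m-element subset J of {1,…,p} such that the sum of the squares of the sines of the m principal angles between W and the coordinate plane R^J is at most m(1 − m/p). -/

import Mathlib

open Matrix Finset Polynomial Real

/-- The `p × |J|` matrix whose columns are the standard basis vectors indexed by `J`,
in increasing order. -/
def stdColMatrix {p : ℕ} (J : Finset (Fin p)) : Matrix (Fin p) (Fin J.card) ℝ :=
  fun i k => if (J.orderIsoOfFin rfl k : Fin p) = i then 1 else 0

lemma exists_good_subset {p m : ℕ} (hmp : m ≤ p) (f : Fin p → ℝ) (hf : ∀ j, 0 ≤ f j) :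
    ∃ J : Finset (Fin p), J.card = m ∧ (m : ℝ) * ∑ j, f j ≤ (p : ℝ) * ∑ j ∈ J, f j := by
  obtain ⟨J₀, _, hJ₀⟩ := Finset.exists_subset_card_eq (s := (Finset.univ : Finset (Fin p))) (n := m)
    (by simpa using hmp)
  have hne : ((Finset.univ : Finset (Fin p)).powersetCard m).Nonempty :=
    ⟨J₀, by simp [Finset.mem_powersetCard, hJ₀]⟩
  obtain ⟨J, hJmem, hJmax⟩ := Finset.exists_max_image _ (fun J => ∑ j ∈ J, f j) hne
  have hJcard : J.card = m := (Finset.mem_powersetCard.mp hJmem).2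
  refine ⟨J, hJcard, ?_⟩
  -- each element outside J satisfies m * f j' ≤ ∑_{j∈J} f j
  have key : ∀ j' ∈ Jᶜ, (m : ℝ) * f j' ≤ ∑ j ∈ J, f j := by
    intro j' hj'
    rw [Finset.mem_compl] at hj'
    have hle : ∀ j ∈ J, f j' ≤ f j := by
      intro j hj
      have hJ' : (insert j' (J.erase j)) ∈ (Finset.univ : Finset (Fin p)).powersetCard m := by
        rw [Finset.mem_powersetCard]
        refine ⟨Finset.subset_univ _, ?_⟩
        rw [Finset.card_insert_of_notMem (fun h => hj' (Finset.mem_of_mem_erase h)),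
          Finset.card_erase_of_mem hj, hJcard]
        have : 0 < m := hJcard ▸ Finset.card_pos.mpr ⟨j, hj⟩
        omega
      have := hJmax _ hJ'
      rw [Finset.sum_insert (fun h => hj' (Finset.mem_of_mem_erase h)),
        Finset.sum_erase_eq_sub hj] at this
      linarith
    calc (m : ℝ) * f j' = ∑ _j ∈ J, f j' := by rw [Finset.sum_const, hJcard]; ring
    _ ≤ ∑ j ∈ J, f j := Finset.sum_le_sum fun j hj => hle j hj
  have hcomp : (m : ℝ) * ∑ j ∈ Jᶜ, f j ≤ ((p - m : ℕ) : ℝ) * ∑ j ∈ J, f j := by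
    have hcc : Jᶜ.card = p - m := by
      rw [Finset.card_compl, hJcard]; simp
    calc (m : ℝ) * ∑ j ∈ Jᶜ, f j = ∑ j' ∈ Jᶜ, (m : ℝ) * f j' := by rw [Finset.mul_sum]
    _ ≤ ∑ _j' ∈ Jᶜ, ∑ j ∈ J, f j := Finset.sum_le_sum key
    _ = ((p - m : ℕ) : ℝ) * ∑ j ∈ J, f j := by rw [Finset.sum_const, hcc]; ring
  have htot : ∑ j, f j = ∑ j ∈ J, f j + ∑ j ∈ Jᶜ, f j :=
    (Finset.sum_add_sum_compl J f).symm
  have hcast : ((p - m : ℕ) : ℝ) = (p : ℝ) - m := by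
    rw [Nat.cast_sub hmp]
  nlinarith [hf, Finset.sum_nonneg (fun j (_ : j ∈ J) => hf j)]

/-- Let `1 ≤ m ≤ p` and let `W` be an `m`-dimensional subspace of `ℝ^p`, given by a `p × m`
matrix `W̃` with orthonormal columns.  There is an `m`-element subset `J ⊆ {1,…,p}` such that
for any principal angles `φ₁,…,φ_m ∈ [0,π/2]` between `W` and the coordinate plane `ℝ^J`
(i.e. `cos φ₁,…,cos φ_m` are the singular values of `W̃ᵀ E_J`, encoded by the characteristic
polynomial of `(W̃ᵀE_J)(W̃ᵀE_J)ᵀ` being `∏ᵢ (X − cos²φᵢ)`), one has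
`∑ᵢ sin²φᵢ ≤ m(1 − m/p)`. -/
theorem exists_coordinate_plane_sin_sq_bound (p m : ℕ) (hm : 1 ≤ m) (hmp : m ≤ p)
    (W : Matrix (Fin p) (Fin m) ℝ) (hW : Wᵀ * W = 1) :
    ∃ J : Finset (Fin p), ∃ hJ : J.card = m,
      ∀ φ : Fin m → ℝ, (∀ i, φ i ∈ Set.Icc 0 (π / 2)) →
        Matrix.charpoly ((Wᵀ * stdColMatrix J) * (Wᵀ * stdColMatrix J)ᵀ)
          = ∏ i : Fin m, (X - C ((Real.cos (φ i)) ^ 2)) →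
        ∑ i : Fin m, (Real.sin (φ i)) ^ 2 ≤ (m : ℝ) * (1 - (m : ℝ) / (p : ℝ)) := by
  have hp : 0 < p := lt_of_lt_of_le hm hmp
  set r : Fin p → ℝ := fun j => ∑ i, (W j i) ^ 2 with hr
  have hrnn : ∀ j, 0 ≤ r j := fun j => Finset.sum_nonneg fun i _ => sq_nonneg _
  obtain ⟨J, hJ, hbound⟩ := exists_good_subset hmp r hrnn
  have htot : ∑ j, r j = (m : ℝ) := by
    have h1 := congrArg Matrix.trace hW
    rw [Matrix.trace_one] at h1
    simp only [Matrix.trace, Matrix.diag, Matrix.mul_apply, Matrix.transpose_apply] at h1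
    rw [Finset.sum_comm] at h1
    simpa [hr, pow_two] using h1
  refine ⟨J, hJ, ?_⟩
  intro φ hφ hcp
  set A := (Wᵀ * stdColMatrix J) * (Wᵀ * stdColMatrix J)ᵀ with hA
  have htr : Matrix.trace A = ∑ j ∈ J, r j := by
    have hB : ∀ i k, (Wᵀ * stdColMatrix J) i k = W (J.orderIsoOfFin rfl k : Fin p) i := by
      intro i k
      simp [Matrix.mul_apply, stdColMatrix, Matrix.transpose_apply]
      rw [Finset.sum_eq_single ((J.orderEmbOfFin rfl) k)]
      · simp
      · intro b _ hb; simp [Ne.symm hb]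
      · simp
    have h2 : Matrix.trace A = ∑ k : Fin J.card, r (J.orderIsoOfFin rfl k : Fin p) := by
      simp only [hA, Matrix.trace, Matrix.diag, Matrix.mul_apply, Matrix.transpose_apply, hB]
      rw [Finset.sum_comm]
      exact Finset.sum_congr rfl fun k _ => by simp [hr, pow_two]
    rw [h2, ← Finset.sum_coe_sort J r]
    exact Equiv.sum_comp (J.orderIsoOfFin rfl).toEquiv (fun j : J => r (j : Fin p))
  have hmne : Nonempty (Fin m) := ⟨⟨0, hm⟩⟩
  have htr2 : Matrix.trace A = ∑ i : Fin m, (Real.cos (φ i)) ^ 2 := by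
    rw [Matrix.trace_eq_neg_charpoly_coeff A, hcp]
    have := Polynomial.prod_X_sub_C_coeff_card_pred (Finset.univ : Finset (Fin m))
      (fun i => (Real.cos (φ i)) ^ 2) (by simp [hm]; omega)
    simp only [Finset.card_univ, Fintype.card_fin] at this ⊢
    rw [this, neg_neg]
  have hsin : ∀ i, (Real.sin (φ i)) ^ 2 = 1 - (Real.cos (φ i)) ^ 2 := by
    intro i
    have := Real.sin_sq_add_cos_sq (φ i)
    linarith
  have hsum : ∑ i : Fin m, (Real.sin (φ i)) ^ 2 = (m : ℝ) - Matrix.trace A := by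
    rw [htr2]
    simp [hsin, Finset.sum_sub_distrib]
  rw [hsum]
  rw [htot] at hbound
  rw [htr]
  have hpr : (0 : ℝ) < p := by exact_mod_cast hp
  have h3 : (m : ℝ) * (1 - (m : ℝ) / p) = ((p : ℝ) * m - m * m) / p := by
    field_simp
  rw [h3, le_div_iff₀ hpr]
  nlinarith [hbound]
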